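/- arXiv:2002.10087 — 2 statements merged into one kernel-verified Lean document; each statement's English description precedes it below -/
import Mathlib

section
/- Let S : [-π,π] → [0,∞) be a measurable function with ∫_{-π}^{π} S(x)/x² dx < ∞, and set σ² = 2 ∫_{-π}^{π} S(x)/x² dx. For an interval I ⊂ ℝ write φ̂_I(x) = ∫_I e^{-ixt} dt. Then as L → ∞: (i) ∫_{-π}^{π} |φ̂_{[0,L]}(x)|² S(x) dx → σ²; (ii) ∫_{-π}^{π} φ̂_{[0,L]}(x) · conj(φ̂_{[L,2L]}(x)) · S(x) dx → -σ²/2; (iii) for every integer k ≥ 2, ∫_{-π}^{π} φ̂_{[0,L]}(x) · conj(φ̂_{[kL,(k+1)L]}(x)) · S(x) dx → 0. -/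
open MeasureTheory Real Filter

/-- The Fourier transform of the indicator of the interval `[a, b]`. -/
noncomputable def phiHatI (a b : ℝ) (x : ℝ) : ℂ :=
  ∫ t in a..b, Complex.exp (-Complex.I * x * t)

lemma mul_tendsto_cocompact {c : ℝ} (hc : c ≠ 0) :
    Tendsto (fun L : ℝ => c * L) atTop (cocompact ℝ) := by
  rw [cocompact_eq_atBot_atTop]
  rcases hc.lt_or_gt with h | h
  · exact (tendsto_const_mul_atBot_of_neg h |>.mpr tendsto_id).mono_right le_sup_left
  · exact (tendsto_const_mul_atTop_of_pos h |>.mpr tendsto_id).mono_right le_sup_right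

lemma tendsto_RL (f : ℝ → ℂ) {c : ℝ} (hc : c ≠ 0) :
    Tendsto (fun L : ℝ =>
      ∫ x in Set.Icc (-π) π, Complex.exp (Complex.I * ((c * L : ℝ) : ℂ) * x) * f x)
      atTop (nhds 0) := by
  set F := (Set.Icc (-π) π).indicator f with hFdef
  have key : ∀ L : ℝ, (∫ x in Set.Icc (-π) π,
        Complex.exp (Complex.I * ((c * L : ℝ) : ℂ) * x) * f x)
      = FourierTransform.fourier F (-c / (2 * π) * L) := by
    intro L
    rw [Real.fourier_real_eq_integral_exp_smul,
      ← integral_indicator measurableSet_Icc]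
    congr 1
    funext v
    rw [hFdef, Set.indicator_apply]
    by_cases hv : v ∈ Set.Icc (-π) π
    · simp only [hv, if_true, smul_eq_mul, hFdef, Set.indicator_of_mem hv]
      congr 1
      have h1 : (-2 * π * v * (-c / (2 * π) * L) : ℝ) = c * L * v := by
        field_simp
      rw [h1]
      push_cast
      ring_nf
    · simp [hv, hFdef, Set.indicator_of_notMem hv]
  simp_rw [key]
  exact (Real.zero_at_infty_fourier F).comp (mul_tendsto_cocompact (by
    simp [Real.pi_ne_zero, hc, div_eq_zero_iff, neg_eq_zero] : (-c / (2 * π) : ℝ) ≠ 0))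

lemma phiHatI_eq (a b : ℝ) {x : ℝ} (hx : x ≠ 0) :
    phiHatI a b x =
      (Complex.exp (-Complex.I * x * b) - Complex.exp (-Complex.I * x * a)) / (-Complex.I * x) := by
  have hc : (-Complex.I * x : ℂ) ≠ 0 := by simp [Complex.ext_iff, hx]
  simpa [phiHatI, mul_assoc] using integral_exp_mul_complex (a := a) (b := b) hc

lemma prod_eq (L c : ℝ) {x : ℝ} (hx : x ≠ 0) :
    phiHatI 0 L x * (starRingEnd ℂ) (phiHatI c (c + L) x) =
      (2 * Complex.exp (Complex.I * c * x) - Complex.exp (Complex.I * (c + L) * x) -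
        Complex.exp (Complex.I * (c - L) * x)) / (x ^ 2) := by
  have hX : (x : ℂ) ≠ 0 := Complex.ofReal_ne_zero.mpr hx
  set u := Complex.exp (Complex.I * x * L) with hu
  set v := Complex.exp (Complex.I * x * c) with hv
  have hu0 : u ≠ 0 := Complex.exp_ne_zero _
  have hv0 : v ≠ 0 := Complex.exp_ne_zero _
  have e1 : Complex.exp (-Complex.I * (x:ℂ) * (L:ℂ)) = u⁻¹ := by
    rw [show (-Complex.I * (x:ℂ) * (L:ℂ)) = -(Complex.I * x * L) by ring, Complex.exp_neg]
  have e0 : Complex.exp (-Complex.I * (x:ℂ) * ((0:ℝ):ℂ)) = 1 := by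
    simp
  have e2 : Complex.exp (-Complex.I * (x:ℂ) * ((c + L : ℝ):ℂ)) = (v * u)⁻¹ := by
    push_cast
    rw [show (-Complex.I * ((x:ℝ):ℂ) * ((c:ℂ) + (L:ℂ))) =
      -((Complex.I * x * c) + (Complex.I * x * L)) by ring, Complex.exp_neg, Complex.exp_add]
  have e3 : Complex.exp (-Complex.I * (x:ℂ) * ((c:ℝ):ℂ)) = v⁻¹ := by
    rw [show (-Complex.I * (x:ℂ) * ((c:ℝ):ℂ)) = -(Complex.I * x * c) by ring, Complex.exp_neg]
  have e4 : Complex.exp (Complex.I * ((c:ℝ):ℂ) * (x:ℂ)) = v := by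
    rw [hv]; ring_nf
  have e5 : Complex.exp (Complex.I * ((c:ℂ) + (L:ℂ)) * (x:ℂ)) = v * u := by
    rw [show (Complex.I * ((c:ℂ) + (L:ℂ)) * (x:ℂ)) =
      (Complex.I * x * c) + (Complex.I * x * L) by ring, Complex.exp_add]
  have e6 : Complex.exp (Complex.I * ((c:ℂ) - (L:ℂ)) * (x:ℂ)) = v * u⁻¹ := by
    rw [show (Complex.I * ((c:ℂ) - (L:ℂ)) * (x:ℂ)) =
      (Complex.I * x * c) + -(Complex.I * x * L) by ring, Complex.exp_add, Complex.exp_neg]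
  have cu : (starRingEnd ℂ) u = u⁻¹ := by
    rw [hu, ← Complex.exp_conj, show (starRingEnd ℂ) (Complex.I * (x:ℂ) * (L:ℂ)) =
      -(Complex.I * x * L) by simp [Complex.conj_ofReal], Complex.exp_neg]
  have cv : (starRingEnd ℂ) v = v⁻¹ := by
    rw [hv, ← Complex.exp_conj, show (starRingEnd ℂ) (Complex.I * (x:ℂ) * (c:ℂ)) =
      -(Complex.I * x * c) by simp [Complex.conj_ofReal], Complex.exp_neg]
  rw [phiHatI_eq 0 L hx, phiHatI_eq c (c + L) hx, e1, e0, e2, e3, e4, e5, e6]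
  simp only [map_div₀, map_sub, map_inv₀, map_mul, map_neg, Complex.conj_I,
    Complex.conj_ofReal, cu, cv, inv_inv]
  rw [div_mul_div_comm, show (-Complex.I * (x:ℂ) * (- -Complex.I * (x:ℂ))) = (x:ℂ)^2 by
    rw [show (-Complex.I * (x:ℂ) * (- -Complex.I * (x:ℂ))) = -(Complex.I^2) * (x:ℂ)^2 by ring,
      Complex.I_sq]; ring]
  congr 1
  field_simp
  ring

/-- asymptotics of the variance and covariances of local masses of adjacent
intervals for a 1D random field whose structure function `S` satisfies
`∫_{-π}^{π} S(x)/x² dx < ∞`. -/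
theorem variance_covariance_intervals_1d
    (S : ℝ → ℝ) (hSmeas : Measurable S) (hS0 : ∀ x, 0 ≤ S x)
    (hSint : IntegrableOn (fun x => S x / x ^ 2) (Set.Icc (-π) π))
    (σ2 : ℝ) (hσ2 : σ2 = 2 * ∫ x in Set.Icc (-π) π, S x / x ^ 2) :
    Tendsto (fun L : ℝ =>
        ∫ x in Set.Icc (-π) π, ‖phiHatI 0 L x‖ ^ 2 * S x)
      atTop (nhds σ2) ∧
    Tendsto (fun L : ℝ =>
        ∫ x in Set.Icc (-π) π,
          phiHatI 0 L x * (starRingEnd ℂ) (phiHatI L (2 * L) x) * (S x : ℂ))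
      atTop (nhds (-(σ2 / 2) : ℂ)) ∧
    ∀ k : ℕ, 2 ≤ k →
      Tendsto (fun L : ℝ =>
          ∫ x in Set.Icc (-π) π,
            phiHatI 0 L x * (starRingEnd ℂ) (phiHatI (k * L) ((k + 1) * L) x) * (S x : ℂ))
        atTop (nhds (0 : ℂ)) := by
  set f : ℝ → ℂ := fun x => ((S x / x ^ 2 : ℝ) : ℂ) with hfdef
  have hfi : IntegrableOn f (Set.Icc (-π) π) := hSint.ofReal
  set F : ℝ → ℂ := fun w => ∫ x in Set.Icc (-π) π, Complex.exp (Complex.I * w * x) * f x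
    with hFdef
  have hbd : ∀ w : ℝ, IntegrableOn (fun x : ℝ => Complex.exp (Complex.I * w * x) * f x)
      (Set.Icc (-π) π) := by
    intro w
    apply hfi.bdd_mul (c := 1)
    · exact (Complex.continuous_exp.comp (by continuity)).aestronglyMeasurable
    · refine Filter.Eventually.of_forall fun x => ?_
      have h0 : (Complex.I * (w : ℂ) * (x : ℂ)).re = 0 := by simp
      rw [Complex.norm_exp, h0, Real.exp_zero]
  have hne : ∀ᵐ x ∂(volume.restrict (Set.Icc (-π) π)), x ≠ (0 : ℝ) := by
    refine ae_restrict_of_ae ?_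
    rw [ae_iff]
    simpa [not_ne_iff, Set.setOf_eq_eq_singleton] using Real.volume_singleton (x := (0:ℝ))
  have hRL : ∀ {c : ℝ}, c ≠ 0 → Tendsto (fun L : ℝ => F (c * L)) atTop (nhds 0) := by
    intro c hc
    simpa only [hFdef] using tendsto_RL f hc
  have hkey : ∀ L c : ℝ, (∫ x in Set.Icc (-π) π,
        phiHatI 0 L x * (starRingEnd ℂ) (phiHatI c (c + L) x) * (S x : ℂ))
      = 2 * F c - F (c + L) - F (c - L) := by
    intro L c
    have h1 : (∫ x in Set.Icc (-π) π,
          phiHatI 0 L x * (starRingEnd ℂ) (phiHatI c (c + L) x) * (S x : ℂ))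
        = ∫ x in Set.Icc (-π) π,
            (2 * (Complex.exp (Complex.I * ((c : ℝ) : ℂ) * x) * f x)
              - Complex.exp (Complex.I * ((c + L : ℝ) : ℂ) * x) * f x
              - Complex.exp (Complex.I * ((c - L : ℝ) : ℂ) * x) * f x) := by
      refine integral_congr_ae ?_
      filter_upwards [hne] with x hx
      rw [prod_eq L c hx, hfdef]
      have hx2 : ((x : ℂ)) ^ 2 ≠ 0 := pow_ne_zero _ (Complex.ofReal_ne_zero.mpr hx)
      push_cast
      field_simp
    have i1 : IntegrableOn (fun x : ℝ => 2 * (Complex.exp (Complex.I * ((c : ℝ) : ℂ) * x) * f x))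
        (Set.Icc (-π) π) := (hbd c).const_mul 2
    have i12 : IntegrableOn (fun x : ℝ =>
        2 * (Complex.exp (Complex.I * ((c : ℝ) : ℂ) * x) * f x)
          - Complex.exp (Complex.I * ((c + L : ℝ) : ℂ) * x) * f x)
        (Set.Icc (-π) π) := i1.sub (hbd (c + L))
    rw [h1, integral_sub i12 (hbd (c - L)), integral_sub i1 (hbd (c + L)), integral_const_mul]
  have hF0 : F 0 = ((σ2 / 2 : ℝ) : ℂ) := by
    have h1 : F 0 = ∫ x in Set.Icc (-π) π, ((S x / x ^ 2 : ℝ) : ℂ) := by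
      simp only [hFdef, hfdef]
      exact integral_congr_ae (Filter.Eventually.of_forall fun x => by simp)
    rw [h1, show (∫ x in Set.Icc (-π) π, ((S x / x ^ 2 : ℝ) : ℂ))
      = ((∫ x in Set.Icc (-π) π, S x / x ^ 2 : ℝ) : ℂ) from integral_ofReal, hσ2]
    push_cast
    ring
  refine ⟨?_, ?_, ?_⟩
  · -- part (i)
    have h1 : ∀ L : ℝ, ((∫ x in Set.Icc (-π) π, ‖phiHatI 0 L x‖ ^ 2 * S x : ℝ) : ℂ)
        = 2 * F 0 - F (0 + L) - F (0 - L) := by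
      intro L
      calc ((∫ x in Set.Icc (-π) π, ‖phiHatI 0 L x‖ ^ 2 * S x : ℝ) : ℂ)
          = ∫ x in Set.Icc (-π) π, ((‖phiHatI 0 L x‖ ^ 2 * S x : ℝ) : ℂ) :=
            integral_ofReal.symm
        _ = ∫ x in Set.Icc (-π) π,
              phiHatI 0 L x * (starRingEnd ℂ) (phiHatI 0 (0 + L) x) * (S x : ℂ) := by
            refine integral_congr_ae (Filter.Eventually.of_forall fun x => ?_)
            simp only [zero_add]
            rw [Complex.mul_conj, Complex.normSq_eq_norm_sq]
            push_cast
            ring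
        _ = 2 * F 0 - F (0 + L) - F (0 - L) := hkey L 0
    have t1 : Tendsto (fun L : ℝ => F (0 + L)) atTop (nhds 0) := by
      simpa using hRL (c := 1) one_ne_zero
    have t2 : Tendsto (fun L : ℝ => F (0 - L)) atTop (nhds 0) := by
      simpa using hRL (c := (-1 : ℝ)) (by norm_num)
    have hval : ((σ2 : ℝ) : ℂ) = 2 * F 0 - 0 - 0 := by rw [hF0]; push_cast; ring
    have T : Tendsto (fun L : ℝ => 2 * F 0 - F (0 + L) - F (0 - L)) atTop
        (nhds ((σ2 : ℝ) : ℂ)) := by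
      rw [hval]; exact (tendsto_const_nhds.sub t1).sub t2
    exact Filter.tendsto_ofReal_iff.mp (T.congr fun L => (h1 L).symm)
  · -- part (ii)
    have h2 : ∀ L : ℝ, (∫ x in Set.Icc (-π) π,
          phiHatI 0 L x * (starRingEnd ℂ) (phiHatI L (2 * L) x) * (S x : ℂ))
        = 2 * F L - F (2 * L) - F 0 := by
      intro L
      have h := hkey L L
      rw [show L + L = 2 * L by ring, show L - L = 0 by ring] at h
      exact h
    have t1 : Tendsto (fun L : ℝ => F L) atTop (nhds 0) := by
      simpa using hRL (c := 1) one_ne_zero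
    have t2 : Tendsto (fun L : ℝ => F (2 * L)) atTop (nhds 0) := hRL two_ne_zero
    have hval : (-(σ2 / 2) : ℂ) = 2 * 0 - 0 - F 0 := by rw [hF0]; push_cast; ring
    have T : Tendsto (fun L : ℝ => 2 * F L - F (2 * L) - F 0) atTop
        (nhds (-(σ2 / 2) : ℂ)) := by
      rw [hval]; exact ((t1.const_mul 2).sub t2).sub tendsto_const_nhds
    exact T.congr fun L => (h2 L).symm
  · -- part (iii)
    intro k hk
    have hk2 : (2 : ℝ) ≤ (k : ℝ) := by exact_mod_cast hk
    have c1 : ((k : ℝ)) ≠ 0 := by linarith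
    have c2 : ((k : ℝ) + 1) ≠ 0 := by linarith
    have c3 : ((k : ℝ) - 1) ≠ 0 := by linarith
    have h3 : ∀ L : ℝ, (∫ x in Set.Icc (-π) π,
          phiHatI 0 L x * (starRingEnd ℂ) (phiHatI (k * L) ((k + 1) * L) x) * (S x : ℂ))
        = 2 * F ((k : ℝ) * L) - F (((k : ℝ) + 1) * L) - F (((k : ℝ) - 1) * L) := by
      intro L
      have h := hkey L ((k : ℝ) * L)
      rw [show (k : ℝ) * L + L = ((k : ℝ) + 1) * L by ring,
        show (k : ℝ) * L - L = ((k : ℝ) - 1) * L by ring] at h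
      exact h
    have T : Tendsto (fun L : ℝ => 2 * F ((k : ℝ) * L) - F (((k : ℝ) + 1) * L)
        - F (((k : ℝ) - 1) * L)) atTop (nhds (0 : ℂ)) := by
      rw [show (0 : ℂ) = 2 * 0 - 0 - 0 by ring]
      exact (((hRL c1).const_mul 2).sub (hRL c2)).sub (hRL c3)
    exact T.congr fun L => (h3 L).symm
end

section
/- Let d ≥ 1 and let S : [-π,π]^d → [0,∞) be measurable with ∫_{[-π,π]^d} S(x)/(x₁² ⋯ x_d²) dx < ∞, and set σ_d² = 2^d ∫_{[-π,π]^d} S(x)/(x₁² ⋯ x_d²) dx. For n = (n₁,…,n_d) with each n_k a nonnegative integer, define φ̂_{n,L}(x) = ∏_{k=1}^{d} (1 - e^{-iLx_k}) e^{-iL n_k x_k} / (i x_k). Then: (i) if n ∈ {0,1}^d and exactly j of its coordinates equal 1 (0 ≤ j ≤ d), then lim_{L→∞} ∫_{[-π,π]^d} φ̂_{0,L}(x) · conj(φ̂_{n,L}(x)) · S(x) dx = (-1)^j σ_d² / 2^j; (ii) if some coordinate n_k ≥ 2, then lim_{L→∞} ∫_{[-π,π]^d} φ̂_{0,L}(x)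 · conj(φ̂_{n,L}(x)) · S(x) dx = 0. In particular, taking n = 0, the variance integral ∫_{[-π,π]^d} |φ̂_{0,L}(x)|² S(x) dx converges to σ_d² as L → ∞. -/
open MeasureTheory Real Filter

/-- The cube `[-π, π]^d`. -/
def cube (d : ℕ) : Set (EuclideanSpace ℝ (Fin d)) :=
  {x | ∀ i, x i ∈ Set.Icc (-π) π}

/-- The Fourier transform of the indicator of the box `C_L^{(n)} = ∏_k [n_k L, (n_k+1) L]`. -/
noncomputable def phiHatBox (d : ℕ) (n : Fin d → ℕ) (L : ℝ) (x : EuclideanSpace ℝ (Fin d)) : ℂ :=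
  ∏ k : Fin d,
    (1 - Complex.exp (-Complex.I * (L : ℂ) * (x k : ℂ))) *
      Complex.exp (-Complex.I * (L : ℂ) * (n k : ℂ) * (x k : ℂ)) / (Complex.I * (x k : ℂ))

namespace CovAux

noncomputable def cc : Fin 3 → ℂ := ![2, -1, -1]
noncomputable def vv : Fin 3 → ℝ := ![0, 1, -1]

lemma factor_eq (L θ : ℝ) (hθ : θ ≠ 0) (m : ℕ) :
    ((1 - Complex.exp (-Complex.I * (L : ℂ) * (θ : ℂ))) *
        Complex.exp (-Complex.I * (L : ℂ) * (0 : ℂ) * (θ : ℂ)) / (Complex.I * (θ : ℂ))) *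
      (starRingEnd ℂ) ((1 - Complex.exp (-Complex.I * (L : ℂ) * (θ : ℂ))) *
        Complex.exp (-Complex.I * (L : ℂ) * (m : ℂ) * (θ : ℂ)) / (Complex.I * (θ : ℂ)))
    = (∑ ε : Fin 3, cc ε *
        Complex.exp (Complex.I * (L : ℂ) * ((((m : ℝ) + vv ε) * θ : ℝ) : ℂ))) *
        (((θ : ℂ)) ^ 2)⁻¹ := by
  have hθC : (θ : ℂ) ≠ 0 := Complex.ofReal_ne_zero.mpr hθ
  have hE : Complex.exp (Complex.I * (L : ℂ) * (θ : ℂ)) ≠ 0 := Complex.exp_ne_zero _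
  -- push the conjugation inside
  simp only [map_div₀, map_mul, map_sub, map_one, ← Complex.exp_conj, map_neg, Complex.conj_I,
    Complex.conj_ofReal, map_natCast]
  -- now rewrite all exponentials in terms of E := exp (I L θ) and Em := exp (m I L θ)
  have e1 : -Complex.I * (L : ℂ) * (θ : ℂ) = -(Complex.I * (L : ℂ) * (θ : ℂ)) := by ring
  have e2 : - -Complex.I * (L : ℂ) * (m : ℂ) * (θ : ℂ)
      = (m : ℂ) * (Complex.I * (L : ℂ) * (θ : ℂ)) := by ring
  rw [e1, e2, Complex.exp_neg]
  rw [show - -Complex.I * (L:ℂ) * (θ:ℂ) = Complex.I * (L:ℂ) * (θ:ℂ) from by ring]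
  rw [show -Complex.I * (L:ℂ) * 0 * (θ:ℂ) = 0 from by ring, Complex.exp_zero]
  simp only [cc, vv, Fin.sum_univ_three, Matrix.cons_val_zero, Matrix.cons_val_one,
    Matrix.head_cons, Matrix.cons_val_two, Matrix.tail_cons]
  push_cast
  rw [show Complex.I * (L:ℂ) * (((m:ℂ) + 0) * (θ:ℂ)) = (m:ℂ) * (Complex.I * (L:ℂ) * (θ:ℂ)) from by ring,
    show Complex.I * (L:ℂ) * (((m:ℂ) + 1) * (θ:ℂ)) = (m:ℂ) * (Complex.I * (L:ℂ) * (θ:ℂ)) + Complex.I * (L:ℂ) * (θ:ℂ) from by ring,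
    show Complex.I * (L:ℂ) * (((m:ℂ) + -1) * (θ:ℂ)) = (m:ℂ) * (Complex.I * (L:ℂ) * (θ:ℂ)) + -(Complex.I * (L:ℂ) * (θ:ℂ)) from by ring,
    Complex.exp_add, Complex.exp_add, Complex.exp_neg]
  generalize Complex.exp ((m:ℂ) * (Complex.I * (L:ℂ) * (θ:ℂ))) = Em
  generalize hEe : Complex.exp (Complex.I * (L:ℂ) * (θ:ℂ)) = E at hE
  have hI : Complex.I ≠ 0 := Complex.I_ne_zero
  field_simp
  ring_nf
  rw [Complex.I_sq]
  ring

lemma pointwise (d : ℕ) (S : EuclideanSpace ℝ (Fin d) → ℝ) (n : Fin d → ℕ) (L : ℝ)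
    (x : EuclideanSpace ℝ (Fin d)) (hx : ∀ k, x k ≠ 0) :
    phiHatBox d 0 L x * (starRingEnd ℂ) (phiHatBox d n L x) * (S x : ℂ)
    = ∑ ε : Fin d → Fin 3, (∏ k, cc (ε k)) *
        (Complex.exp (Complex.I * (L : ℂ) *
            ((∑ k, ((n k : ℝ) + vv (ε k)) * x k : ℝ) : ℂ)) *
          ((S x / ∏ k : Fin d, (x k) ^ 2 : ℝ) : ℂ)) := by
  rw [phiHatBox, phiHatBox, map_prod, ← Finset.prod_mul_distrib]
  simp only [Pi.zero_apply, Nat.cast_zero]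
  rw [Finset.prod_congr rfl (fun k _ => factor_eq L (x k) (hx k) (n k)),
    Finset.prod_mul_distrib, Finset.prod_univ_sum]
  simp only [Fintype.piFinset_univ]
  rw [Finset.sum_mul, Finset.sum_mul]
  refine Finset.sum_congr rfl fun ε _ => ?_
  rw [Finset.prod_mul_distrib]
  have h1 : (∏ k, Complex.exp (Complex.I * (L : ℂ) * ((((n k : ℝ) + vv (ε k)) * x k : ℝ) : ℂ)))
      = Complex.exp (Complex.I * (L : ℂ) * ((∑ k, ((n k : ℝ) + vv (ε k)) * x k : ℝ) : ℂ)) := by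
    rw [← Complex.exp_sum]
    congr 1
    push_cast
    rw [Finset.mul_sum]
  rw [h1]
  have h2 : ((S x / ∏ k : Fin d, (x k) ^ 2 : ℝ) : ℂ)
      = (S x : ℂ) * ∏ k : Fin d, (((x k : ℂ)) ^ 2)⁻¹ := by
    push_cast
    rw [div_eq_mul_inv, ← Finset.prod_inv_distrib]
  rw [h2]
  ring

lemma cube_measurable (d : ℕ) : MeasurableSet (cube d) := by
  have : cube d = ⋂ i, (fun x : EuclideanSpace ℝ (Fin d) => x i) ⁻¹' (Set.Icc (-π) π) := by
    ext x; simp [cube, Set.mem_iInter]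
  rw [this]
  exact MeasurableSet.iInter fun i =>
    ((EuclideanSpace.proj (𝕜 := ℝ) i).continuous.measurable) measurableSet_Icc

lemma null_hyperplane (d : ℕ) (k : Fin d) :
    volume {x : EuclideanSpace ℝ (Fin d) | x k = 0} = 0 := by
  have h : {x : EuclideanSpace ℝ (Fin d) | x k = 0}
      = (LinearMap.ker (EuclideanSpace.projₗ (𝕜 := ℝ) k) : Set _) := by
    ext x; simp [LinearMap.mem_ker]
  rw [h]
  refine Measure.addHaar_submodule _ _ ?_
  intro htop
  have : EuclideanSpace.single k (1:ℝ) ∈ LinearMap.ker (EuclideanSpace.projₗ (𝕜 := ℝ) k) := by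
    rw [htop]; trivial
  simp [LinearMap.mem_ker, EuclideanSpace.single_apply] at this

lemma ae_nonzero (d : ℕ) : ∀ᵐ x : EuclideanSpace ℝ (Fin d), ∀ k, x k ≠ 0 := by
  have : volume (⋃ k, {x : EuclideanSpace ℝ (Fin d) | x k = 0}) = 0 :=
    measure_iUnion_null fun k => null_hyperplane d k
  filter_upwards [measure_eq_zero_iff_ae_notMem.mp this] with x hx k hk
  exact hx (Set.mem_iUnion.mpr ⟨k, hk⟩)

lemma riemann_lebesgue (d : ℕ) (f : EuclideanSpace ℝ (Fin d) → ℂ)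
    (a : EuclideanSpace ℝ (Fin d)) (ha : a ≠ 0) :
    Tendsto (fun L : ℝ => ∫ v, Complex.exp (Complex.I * (L : ℂ) *
        ((∑ k, a k * v k : ℝ) : ℂ)) * f v) atTop (nhds 0) := by
  have main := tendsto_integral_exp_inner_smul_cocompact (V := EuclideanSpace ℝ (Fin d)) (f := f)
  have hb : (-a) ≠ 0 := neg_ne_zero.mpr ha
  have hcomp : Tendsto (fun L : ℝ => (L / (2 * π)) • (-a)) atTop
      (cocompact (EuclideanSpace ℝ (Fin d))) := by
    rw [← Metric.cobounded_eq_cocompact, ← tendsto_norm_atTop_iff_cobounded]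
    have h1 : Tendsto (fun L : ℝ => |L / (2 * π)| * ‖-a‖) atTop atTop := by
      refine Tendsto.atTop_mul_const (norm_pos_iff.mpr hb) ?_
      exact tendsto_abs_atTop_atTop.comp (tendsto_id.atTop_div_const (by positivity))
    refine h1.congr fun L => ?_
    rw [norm_smul, Real.norm_eq_abs]
  have := main.comp hcomp
  refine this.congr fun L => ?_
  refine integral_congr_ae (Filter.Eventually.of_forall fun v => ?_)
  dsimp only [Function.comp]
  rw [Circle.smul_def, Real.fourierChar_apply]
  congr 2
  have : (inner ℝ v a : ℝ) = ∑ k, a k * v k := by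
    rw [PiLp.inner_apply]
    exact Finset.sum_congr rfl fun k _ => by simp [RCLike.inner_apply, mul_comm]
  have hπ : (π : ℝ) ≠ 0 := Real.pi_ne_zero
  have harg : 2 * π * -(inner ℝ v ((L / (2 * π)) • (-a)) : ℝ) = L * (∑ k, a k * v k) := by
    rw [real_inner_smul_right, inner_neg_right, this]
    field_simp
  rw [harg]
  push_cast
  ring

lemma main_tendsto (d : ℕ) (S : EuclideanSpace ℝ (Fin d) → ℝ)
    (hSint : IntegrableOn (fun x => S x / ∏ k : Fin d, (x k) ^ 2) (cube d))
    (n : Fin d → ℕ) :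
    Tendsto (fun L : ℝ => ∫ x in cube d,
        phiHatBox d 0 L x * (starRingEnd ℂ) (phiHatBox d n L x) * (S x : ℂ))
      atTop (nhds (∑ ε : Fin d → Fin 3,
        if ∀ k, (n k : ℝ) + vv (ε k) = 0 then
          (∏ k, cc (ε k)) * (((∫ x in cube d, S x / ∏ k : Fin d, (x k) ^ 2) : ℝ) : ℂ)
        else 0)) := by
  have hmeas := cube_measurable d
  have hgC : IntegrableOn (fun x => ((S x / ∏ k : Fin d, (x k) ^ 2 : ℝ) : ℂ)) (cube d) :=
    hSint.ofReal
  have hexp_cont : ∀ (L : ℝ) (c : Fin d → ℝ), Continuous (fun v : EuclideanSpace ℝ (Fin d) =>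
      Complex.exp (Complex.I * (L : ℂ) * ((∑ k, c k * v k : ℝ) : ℂ))) := by
    intro L c
    refine Complex.continuous_exp.comp (continuous_const.mul
      (Complex.continuous_ofReal.comp ?_))
    exact continuous_finset_sum _ fun k _ =>
      continuous_const.mul (EuclideanSpace.proj (𝕜 := ℝ) k).continuous
  have hexp_bdd : ∀ (L : ℝ) (r : ℝ), ‖Complex.exp (Complex.I * (L : ℂ) * (r : ℂ))‖ ≤ 1 := by
    intro L r
    rw [Complex.norm_exp]
    simp
  have hint : ∀ (L : ℝ) (ε : Fin d → Fin 3),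
      IntegrableOn (fun x : EuclideanSpace ℝ (Fin d) =>
        (∏ k, cc (ε k)) * (Complex.exp (Complex.I * (L : ℂ) *
          ((∑ k, ((n k : ℝ) + vv (ε k)) * x k : ℝ) : ℂ)) *
          ((S x / ∏ k : Fin d, (x k) ^ 2 : ℝ) : ℂ))) (cube d) := by
    intro L ε
    refine Integrable.const_mul ?_ _
    refine hgC.bdd_mul ((hexp_cont L _).aestronglyMeasurable) (Filter.Eventually.of_forall fun x => hexp_bdd L _)
  have key : ∀ L : ℝ, (∫ x in cube d,
        phiHatBox d 0 L x * (starRingEnd ℂ) (phiHatBox d n L x) * (S x : ℂ))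
      = ∑ ε : Fin d → Fin 3, (∏ k, cc (ε k)) *
          ∫ v, Complex.exp (Complex.I * (L : ℂ) *
            ((∑ k, ((n k : ℝ) + vv (ε k)) * v k : ℝ) : ℂ)) *
            (cube d).indicator (fun x => ((S x / ∏ k : Fin d, (x k) ^ 2 : ℝ) : ℂ)) v := by
    intro L
    have h1 : (∫ x in cube d,
          phiHatBox d 0 L x * (starRingEnd ℂ) (phiHatBox d n L x) * (S x : ℂ))
        = ∫ x in cube d, ∑ ε : Fin d → Fin 3, (∏ k, cc (ε k)) *
            (Complex.exp (Complex.I * (L : ℂ) *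
              ((∑ k, ((n k : ℝ) + vv (ε k)) * x k : ℝ) : ℂ)) *
              ((S x / ∏ k : Fin d, (x k) ^ 2 : ℝ) : ℂ)) := by
      refine setIntegral_congr_ae hmeas ?_
      filter_upwards [ae_nonzero d] with x hx _
      exact pointwise d S n L x hx
    rw [h1, integral_finset_sum _ (fun ε _ => hint L ε)]
    refine Finset.sum_congr rfl fun ε _ => ?_
    rw [integral_const_mul]
    congr 1
    rw [← integral_indicator hmeas]
    congr 1
    ext v
    simp only [Set.indicator_mul_right]
  rw [tendsto_congr key]
  refine tendsto_finset_sum _ fun ε _ => ?_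
  by_cases h : ∀ k, (n k : ℝ) + vv (ε k) = 0
  · rw [if_pos h]
    have hconst : ∀ L : ℝ, (∏ k, cc (ε k)) *
        (∫ v, Complex.exp (Complex.I * (L : ℂ) *
            ((∑ k, ((n k : ℝ) + vv (ε k)) * v k : ℝ) : ℂ)) *
            (cube d).indicator (fun x => ((S x / ∏ k : Fin d, (x k) ^ 2 : ℝ) : ℂ)) v)
        = (∏ k, cc (ε k)) * (((∫ x in cube d, S x / ∏ k : Fin d, (x k) ^ 2) : ℝ) : ℂ) := by
      intro L
      congr 1
      have hz : ∀ v : EuclideanSpace ℝ (Fin d),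
          (∑ k, ((n k : ℝ) + vv (ε k)) * v k : ℝ) = 0 := fun v =>
        Finset.sum_eq_zero fun k _ => by rw [h k, zero_mul]
      simp only [hz, Complex.ofReal_zero, mul_zero, Complex.exp_zero, one_mul]
      rw [integral_indicator hmeas]
      exact integral_ofReal
    rw [tendsto_congr hconst]
    exact tendsto_const_nhds
  · rw [if_neg h]
    push_neg at h
    obtain ⟨k₀, hk₀⟩ := h
    have ha : (WithLp.toLp 2 (fun k => (n k : ℝ) + vv (ε k)) : EuclideanSpace ℝ (Fin d)) ≠ 0 := by
      intro h0
      exact hk₀ (by rw [show ((n k₀ : ℝ) + vv (ε k₀)) =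
        (WithLp.toLp 2 (fun k => (n k : ℝ) + vv (ε k)) : EuclideanSpace ℝ (Fin d)) k₀ from rfl, h0]; rfl)
    have := (riemann_lebesgue d
      ((cube d).indicator (fun x => ((S x / ∏ k : Fin d, (x k) ^ 2 : ℝ) : ℂ)))
      _ ha).const_mul (∏ k, cc (ε k))
    simpa using this

lemma vv_eq_zero_iff (i : Fin 3) : vv i = 0 ↔ i = 0 := by
  fin_cases i <;> norm_num [vv] <;> decide

lemma vv_eq_neg_one_iff (i : Fin 3) : vv i = -1 ↔ i = 2 := by
  fin_cases i <;> norm_num [vv] <;> decide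

lemma vv_mem (i : Fin 3) : vv i = 0 ∨ vv i = 1 ∨ vv i = -1 := by
  fin_cases i <;> norm_num [vv]

lemma cc_zero : cc 0 = 2 := rfl
lemma cc_two : cc 2 = -1 := rfl
lemma vv_zero : vv 0 = 0 := rfl
lemma vv_two : vv 2 = -1 := rfl

end CovAux

open CovAux in
/-- oscillating limits of the covariances of local masses of adjacent boxes
`C_L^{(0)}` and `C_L^{(n)}` for a random field on `ℤ^d` whose structure function `S`
satisfies `∫ S(x)/(x₁²⋯x_d²) dx < ∞`. -/
theorem covariance_boxes
    (d : ℕ) (hd : 1 ≤ d)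
    (S : EuclideanSpace ℝ (Fin d) → ℝ) (hSmeas : Measurable S) (hS0 : ∀ x, 0 ≤ S x)
    (hSint : IntegrableOn (fun x => S x / ∏ k : Fin d, (x k) ^ 2) (cube d))
    (σd2 : ℝ) (hσd2 : σd2 = 2 ^ d * ∫ x in cube d, S x / ∏ k : Fin d, (x k) ^ 2) :
    (∀ (n : Fin d → ℕ) (j : ℕ), (∀ k, n k ≤ 1) →
        (Finset.univ.filter fun k => n k = 1).card = j →
        Tendsto (fun L : ℝ =>
            ∫ x in cube d,
              phiHatBox d 0 L x * (starRingEnd ℂ) (phiHatBox d n L x) * (S x : ℂ))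
          atTop (nhds (((-1) ^ j * σd2 / 2 ^ j : ℝ) : ℂ))) ∧
    (∀ n : Fin d → ℕ, (∃ k, 2 ≤ n k) →
        Tendsto (fun L : ℝ =>
            ∫ x in cube d,
              phiHatBox d 0 L x * (starRingEnd ℂ) (phiHatBox d n L x) * (S x : ℂ))
          atTop (nhds (0 : ℂ))) ∧
    Tendsto (fun L : ℝ =>
        ∫ x in cube d, ‖phiHatBox d 0 L x‖ ^ 2 * S x)
      atTop (nhds σd2) := by
  set IG : ℝ := ∫ x in cube d, S x / ∏ k : Fin d, (x k) ^ 2 with hIG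
  have part1 : ∀ (n : Fin d → ℕ) (j : ℕ), (∀ k, n k ≤ 1) →
      (Finset.univ.filter fun k => n k = 1).card = j →
      Tendsto (fun L : ℝ =>
          ∫ x in cube d,
            phiHatBox d 0 L x * (starRingEnd ℂ) (phiHatBox d n L x) * (S x : ℂ))
        atTop (nhds (((-1) ^ j * σd2 / 2 ^ j : ℝ) : ℂ)) := by
    intro n j hn hj
    have main := main_tendsto d S hSint n
    have hjle : j ≤ d := by
      rw [← hj]
      exact (Finset.card_filter_le _ _).trans (by simp)
    set εstar : Fin d → Fin 3 := fun k => if n k = 0 then 0 else 2 with hεstar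
    have hiff : ∀ ε : Fin d → Fin 3, (∀ k, (n k : ℝ) + vv (ε k) = 0) ↔ ε = εstar := by
      intro ε
      constructor
      · intro hε
        funext k
        have hk := hε k
        rcases Nat.le_one_iff_eq_zero_or_eq_one.mp (hn k) with h0 | h1
        · rw [h0] at hk
          push_cast at hk
          rw [zero_add] at hk
          rw [(vv_eq_zero_iff _).mp hk]
          simp [hεstar, h0]
        · rw [h1] at hk
          push_cast at hk
          have : vv (ε k) = -1 := by linarith
          rw [(vv_eq_neg_one_iff _).mp this]
          simp [hεstar, h1]
      · rintro rfl k
        by_cases h0 : n k = 0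
        · simp [hεstar, h0, vv_zero]
        · have hk1 := hn k
          have h1 : n k = 1 := by omega
          simp [hεstar, h0, h1, vv_two]
    have hsum : (∑ ε : Fin d → Fin 3,
        if ∀ k, (n k : ℝ) + vv (ε k) = 0 then
          (∏ k, cc (ε k)) * ((IG : ℝ) : ℂ) else 0)
        = (((-1) ^ j * σd2 / 2 ^ j : ℝ) : ℂ) := by
      have step1 : (∑ ε : Fin d → Fin 3,
          if ∀ k, (n k : ℝ) + vv (ε k) = 0 then
            (∏ k, cc (ε k)) * ((IG : ℝ) : ℂ) else 0)
          = ∑ ε : Fin d → Fin 3,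
            if ε = εstar then (∏ k, cc (ε k)) * ((IG : ℝ) : ℂ) else 0 := by
        refine Finset.sum_congr rfl fun ε _ => ?_
        simp only [hiff ε]
      rw [step1, Finset.sum_ite_eq' Finset.univ εstar]
      simp only [Finset.mem_univ, if_true]
      have hccfun : ∀ k, cc (εstar k) = if n k = 0 then (2 : ℂ) else -1 := by
        intro k
        by_cases h0 : n k = 0 <;> simp [hεstar, h0, cc_zero, cc_two]
      rw [Finset.prod_congr rfl fun k _ => hccfun k, Finset.prod_ite, Finset.prod_const,
        Finset.prod_const]
      have hcard1 : (Finset.univ.filter fun k => ¬ n k = 0).card = j := by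
        rw [← hj]
        congr 1
        refine Finset.filter_congr fun k _ => ?_
        have := hn k
        constructor <;> intro h <;> omega
      have hcard0 : (Finset.univ.filter fun k => n k = 0).card = d - j := by
        have := Finset.card_filter_add_card_filter_not
          (s := (Finset.univ : Finset (Fin d))) (p := fun k => n k = 0)
        rw [hcard1] at this
        simp only [Finset.card_univ, Fintype.card_fin] at this
        omega
      rw [hcard1, hcard0, hσd2]
      push_cast
      have h2 : ((2 : ℂ)) ^ (d - j) = 2 ^ d / 2 ^ j := by
        rw [eq_div_iff (pow_ne_zero _ (two_ne_zero)), ← pow_add]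
        congr 1
        omega
      rw [h2]
      field_simp
    rw [← hsum]
    exact main
  have part2 : ∀ n : Fin d → ℕ, (∃ k, 2 ≤ n k) →
      Tendsto (fun L : ℝ =>
          ∫ x in cube d,
            phiHatBox d 0 L x * (starRingEnd ℂ) (phiHatBox d n L x) * (S x : ℂ))
        atTop (nhds (0 : ℂ)) := by
    intro n hn
    have main := main_tendsto d S hSint n
    have hsum : (∑ ε : Fin d → Fin 3,
        if ∀ k, (n k : ℝ) + vv (ε k) = 0 then
          (∏ k, cc (ε k)) * ((IG : ℝ) : ℂ) else 0) = 0 := by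
      refine Finset.sum_eq_zero fun ε _ => ?_
      rw [if_neg]
      intro hall
      obtain ⟨k, hk⟩ := hn
      have h2 : (2 : ℝ) ≤ (n k : ℝ) := by exact_mod_cast hk
      have := hall k
      rcases vv_mem (ε k) with h | h | h <;> rw [h] at this <;> linarith
    rw [← hsum]
    exact main
  refine ⟨part1, part2, ?_⟩
  have h0 := part1 0 0 (fun k => by simp) (by simp)
  have hval : (((-1 : ℝ) ^ 0 * σd2 / 2 ^ 0 : ℝ) : ℂ) = ((σd2 : ℝ) : ℂ) := by norm_num
  rw [hval] at h0
  have key : ∀ L : ℝ, (∫ x in cube d,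
        phiHatBox d 0 L x * (starRingEnd ℂ) (phiHatBox d 0 L x) * (S x : ℂ))
      = (((∫ x in cube d, ‖phiHatBox d 0 L x‖ ^ 2 * S x) : ℝ) : ℂ) := by
    intro L
    have hpt : ∀ x, phiHatBox d 0 L x * (starRingEnd ℂ) (phiHatBox d 0 L x) * (S x : ℂ)
        = ((‖phiHatBox d 0 L x‖ ^ 2 * S x : ℝ) : ℂ) := by
      intro x
      rw [Complex.mul_conj, Complex.sq_norm]
      push_cast
      ring
    simp_rw [hpt]
    exact integral_ofReal
  simp_rw [key] at h0
  have := (Complex.continuous_re.tendsto _).comp h0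
  simpa [Function.comp_def] using this
end
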